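/- (Gentle measurement lemma) Let ρ be a quantum state on a finite-dimensional Hilbert space and Π an orthogonal projection with Tr(Πρ) > 0. Then F(ρ, ΠρΠ / Tr(Πρ)) ≥ √(Tr(Πρ)). -/

import Mathlib

open Matrix
open scoped Kronecker ComplexOrder

noncomputable section

def mfun {n : Type*} [Fintype n] [DecidableEq n] (f : ℝ → ℝ) (A : Matrix n n ℂ) : Matrix n n ℂ :=
  if h : A.IsHermitian then
    h.eigenvectorUnitary.1 * Matrix.diagonal (fun i => (f (h.eigenvalues i) : ℂ)) *
      (star h.eigenvectorUnitary.1)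
  else 0

def psqrt {n : Type*} [Fintype n] [DecidableEq n] (A : Matrix n n ℂ) : Matrix n n ℂ :=
  mfun Real.sqrt A

def mlog {n : Type*} [Fintype n] [DecidableEq n] (A : Matrix n n ℂ) : Matrix n n ℂ :=
  mfun Real.log A

def traceNorm {n : Type*} [Fintype n] [DecidableEq n] (A : Matrix n n ℂ) : ℝ :=
  ((psqrt (Aᴴ * A)).trace).re

def fid {n : Type*} [Fintype n] [DecidableEq n] (ρ σ : Matrix n n ℂ) : ℝ :=
  traceNorm (psqrt ρ * psqrt σ)

def vNEntropy {n : Type*} [Fintype n] [DecidableEq n] (A : Matrix n n ℂ) : ℝ :=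
  - ((A * mlog A).trace).re

def relEnt {n : Type*} [Fintype n] [DecidableEq n] (ρ σ : Matrix n n ℂ) : ℝ :=
  ((ρ * mlog ρ).trace - (ρ * mlog σ).trace).re

namespace Matrix.PosSemidef

open scoped MatrixOrder

variable {n : Type*} [Fintype n] [DecidableEq n] {A : Matrix n n ℂ}

def sqrt (hA : A.PosSemidef) : Matrix n n ℂ :=
  hA.1.eigenvectorUnitary.1 * Matrix.diagonal (fun i => ((Real.sqrt (hA.1.eigenvalues i) : ℝ) : ℂ)) *
    (star hA.1.eigenvectorUnitary.1)

lemma sqrt_eq_cfc_sqrt (hA : A.PosSemidef) : hA.sqrt = CFC.sqrt A := by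
  rw [CFC.sqrt_eq_real_sqrt A hA.nonneg, cfcₙ_eq_cfc, hA.1.cfc_eq]
  rfl

lemma posSemidef_sqrt (hA : A.PosSemidef) : hA.sqrt.PosSemidef := by
  rw [sqrt_eq_cfc_sqrt]; exact (CFC.sqrt_nonneg A).posSemidef

lemma sqrt_mul_self (hA : A.PosSemidef) : hA.sqrt * hA.sqrt = A := by
  rw [sqrt_eq_cfc_sqrt]; exact CFC.sqrt_mul_sqrt_self A hA.nonneg

lemma eq_sqrt_of_sq_eq {B : Matrix n n ℂ} (hB' : B.PosSemidef) (hA : A.PosSemidef)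
    (h : B ^ 2 = A) : B = hA.sqrt := by
  rw [sqrt_eq_cfc_sqrt]; exact (CFC.sqrt_unique (by rw [← sq, h]) hB'.nonneg).symm

end Matrix.PosSemidef

lemma psqrt_eq {n : Type*} [Fintype n] [DecidableEq n] {A : Matrix n n ℂ}
    (hA : A.PosSemidef) : psqrt A = hA.sqrt := by
  rw [psqrt, mfun, dif_pos hA.1]
  rfl

lemma posSemidef_smul_real {n : Type*} [Fintype n] [DecidableEq n] {A : Matrix n n ℂ}
    (hA : A.PosSemidef) {r : ℝ} (hr : 0 ≤ r) : (r • A).PosSemidef := by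
  have h : (Real.sqrt r • (1 : Matrix n n ℂ)) * A *
      (Real.sqrt r • (1 : Matrix n n ℂ))ᴴ = r • A := by
    rw [conjTranspose_smul, conjTranspose_one]
    simp [smul_smul, Matrix.mul_smul, Matrix.smul_mul, Real.mul_self_sqrt hr]
  have := hA.mul_mul_conjTranspose_same (Real.sqrt r • (1 : Matrix n n ℂ))
  rwa [h] at this

/-- Gentle measurement lemma: for a state ρ and projection P with
`Tr(Pρ) > 0`, we have `F(ρ, PρP/Tr(Pρ)) ≥ √(Tr(Pρ))`. -/
theorem stmt2 {n : Type*} [Fintype n] [DecidableEq n]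
    (ρ P : Matrix n n ℂ) (hρ : ρ.PosSemidef) (hρ1 : ρ.trace = 1)
    (hP : Pᴴ = P) (hP2 : P * P = P)
    (hpos : 0 < ((P * ρ).trace).re) :
    Real.sqrt (((P * ρ).trace).re) ≤
      fid ρ ((((P * ρ).trace).re)⁻¹ • (P * ρ * P)) := by
  set c : ℝ := ((P * ρ).trace).re with hc
  have hc0 : c ≠ 0 := ne_of_gt hpos
  set σ : Matrix n n ℂ := c⁻¹ • (P * ρ * P) with hσdef
  have hPρP : (P * ρ * P).PosSemidef := by
    have := hρ.mul_mul_conjTranspose_same P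
    rwa [hP] at this
  have hσ : σ.PosSemidef := posSemidef_smul_real hPρP (inv_nonneg.2 hpos.le)
  set S := psqrt ρ with hSd
  set Q := psqrt σ with hQd
  have hSps : S.PosSemidef := by rw [hSd, psqrt_eq hρ]; exact hρ.posSemidef_sqrt
  have hQps : Q.PosSemidef := by rw [hQd, psqrt_eq hσ]; exact hσ.posSemidef_sqrt
  have hS2 : S * S = ρ := by rw [hSd, psqrt_eq hρ]; exact hρ.sqrt_mul_self
  have hQ2 : Q * Q = σ := by rw [hQd, psqrt_eq hσ]; exact hσ.sqrt_mul_self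
  have hσP : σ * (1 - P) = 0 := by
    have h1 : (P * ρ * P) * (1 - P) = 0 := by
      rw [Matrix.mul_sub, Matrix.mul_one, mul_assoc (P * ρ) P P, hP2, sub_self]
    rw [hσdef, Matrix.smul_mul, h1, smul_zero]
  have hQP : Q * P = Q := by
    have hM : (Q * (1 - P))ᴴ * (Q * (1 - P)) = 0 := by
      rw [conjTranspose_mul, conjTranspose_sub, conjTranspose_one, hP, hQps.1,
        mul_assoc, ← mul_assoc Q Q, hQ2, ← mul_assoc, mul_assoc (1 - P) σ, hσP,
        Matrix.mul_zero]
    have hM0 : Q * (1 - P) = 0 := Matrix.conjTranspose_mul_self_eq_zero.mp hM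
    rw [Matrix.mul_sub, Matrix.mul_one, sub_eq_zero] at hM0
    exact hM0.symm
  have hPQ : P * Q = Q := by
    have := congrArg conjTranspose hQP
    rwa [conjTranspose_mul, hQps.1, hP] at this
  have hPρP' : P * ρ * P = c • σ := by
    rw [hσdef, smul_smul, mul_inv_cancel₀ hc0, one_smul]
  have hAA : (S * Q)ᴴ * (S * Q) = c • (σ * σ) := by
    rw [conjTranspose_mul, hQps.1, hSps.1]
    calc Q * S * (S * Q) = Q * (S * S) * Q := by noncomm_ring
    _ = (Q * P) * ρ * (P * Q) := by rw [hS2, hQP, hPQ]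
    _ = Q * (P * ρ * P) * Q := by noncomm_ring
    _ = Q * (c • σ) * Q := by rw [hPρP']
    _ = c • (Q * σ * Q) := by rw [Matrix.mul_smul, Matrix.smul_mul]
    _ = c • (σ * σ) := by rw [← hQ2]; congr 1; noncomm_ring
  have hσσ : (σ * σ).PosSemidef := by
    have h : σ * σ = σᴴ * σ := by rw [hσ.1]
    rw [h]; exact posSemidef_conjTranspose_mul_self σ
  have hB : (c • (σ * σ)).PosSemidef := posSemidef_smul_real hσσ hpos.le
  have hA' : (Real.sqrt c • σ).PosSemidef := posSemidef_smul_real hσ (Real.sqrt_nonneg c)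
  have key : Real.sqrt c • σ = hB.sqrt := by
    refine hA'.eq_sqrt_of_sq_eq hB ?_
    rw [pow_two, Matrix.smul_mul, Matrix.mul_smul, smul_smul, Real.mul_self_sqrt hpos.le]
  have hσtr : (σ.trace).re = 1 := by
    rw [hσdef, Matrix.trace_smul, Complex.smul_re, Matrix.trace_mul_cycle P ρ P, hP2,
      ← hc, smul_eq_mul, inv_mul_cancel₀ hc0]
  have hfid : fid ρ σ = Real.sqrt c := by
    simp only [fid, traceNorm]
    rw [← hSd, ← hQd, hAA, psqrt_eq hB, ← key, Matrix.trace_smul,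
      Complex.smul_re, hσtr, smul_eq_mul, mul_one]
  rw [hfid]
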